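/- Let D be a probability measure on a measurable space, let A_1, ..., A_N be pairwise disjoint measurable sets with D(A_j) ≥ p > 0 for every j, and let b ∈ ℕ and δ ∈ (0,1). Let X_1, ..., X_m be i.i.d. with law D. If m·p ≥ 2(b+1) and m·p ≥ 8·ln(N/δ), then with probability at least 1−δ, for every j ∈ {1,...,N} at least b+1 of the points X_1, ..., X_m lie in A_j. -/

import Mathlib

open MeasureTheory
open scoped ENNReal NNReal

lemma lintegral_pi_pow {α : Type*} [MeasurableSpace α] (D : Measure α) [IsProbabilityMeasure D]
    (f : α → ℝ≥0∞) (hf : Measurable f) (m : ℕ) :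
    ∫⁻ ω, ∏ i, f (ω i) ∂(Measure.pi fun _ : Fin m => D) = (∫⁻ x, f x ∂D) ^ m := by
  induction m with
  | zero =>
    simp [Measure.pi_of_empty]
  | succ n ih =>
    have hmp := measurePreserving_piFinSuccAbove (fun _ : Fin (n + 1) => D) 0
    have hG : Measurable fun z : α × (Fin n → α) => f z.1 * ∏ j, f (z.2 j) :=
      (hf.comp measurable_fst).mul
        (Finset.measurable_prod _ fun j _ => hf.comp ((measurable_pi_apply j).comp measurable_snd))
    have hcomp : ∀ ω : Fin (n + 1) → α,
        (fun z : α × (Fin n → α) => f z.1 * ∏ j, f (z.2 j))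
          (MeasurableEquiv.piFinSuccAbove (fun _ => α) 0 ω) = ∏ i, f (ω i) := by
      intro ω
      simp [MeasurableEquiv.piFinSuccAbove, Fin.prod_univ_succ, Fin.succAbove, Fin.tail]
    calc ∫⁻ ω, ∏ i, f (ω i) ∂(Measure.pi fun _ : Fin (n + 1) => D)
        = ∫⁻ ω, (fun z : α × (Fin n → α) => f z.1 * ∏ j, f (z.2 j))
            (MeasurableEquiv.piFinSuccAbove (fun _ => α) 0 ω)
            ∂(Measure.pi fun _ : Fin (n + 1) => D) := by
          simp_rw [hcomp]
      _ = ∫⁻ z, f z.1 * ∏ j, f (z.2 j) ∂(D.prod (Measure.pi fun _ : Fin n => D)) :=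
          hmp.lintegral_comp hG
      _ = (∫⁻ x, f x ∂D) ^ (n + 1) := by
          rw [lintegral_prod _ hG.aemeasurable]
          have hinner : ∀ x : α, (∫⁻ y, f x * ∏ j, f (y j) ∂(Measure.pi fun _ : Fin n => D))
              = f x * (∫⁻ x, f x ∂D) ^ n := by
            intro x
            rw [lintegral_const_mul _ (show Measurable fun y : Fin n → α => ∏ j, f (y j) by
              fun_prop), ih]
          simp_rw [hinner]
          rw [lintegral_mul_const _ hf]
          ring

lemma real_chernoff_ineq (p δ : ℝ) (N b m : ℕ) (hp : 0 < p) (hp1 : p ≤ 1)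
    (hδ0 : 0 < δ) (hN : 1 ≤ N)
    (h1 : 2 * ((b : ℝ) + 1) ≤ (m : ℝ) * p)
    (h2 : 8 * Real.log (N / δ) ≤ (m : ℝ) * p) :
    (2 : ℝ) ^ b * (1 - p / 2) ^ m ≤ δ / N := by
  have hNpos : (0 : ℝ) < N := by exact_mod_cast hN
  have hl2 : Real.log 2 < 0.6931471808 := Real.log_two_lt_d9
  have hl2pos : 0 < Real.log 2 := Real.log_pos one_lt_two
  have e1 : (2 : ℝ) ^ b = Real.exp ((b : ℝ) * Real.log 2) := by
    rw [Real.exp_nat_mul, Real.exp_log (by norm_num : (0:ℝ) < 2)]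
  have e2 : (1 - p / 2) ^ m ≤ Real.exp (-((m : ℝ) * p / 2)) := by
    calc (1 - p / 2) ^ m ≤ (Real.exp (-(p / 2))) ^ m := by
          apply pow_le_pow_left₀ (by linarith)
          have := Real.add_one_le_exp (-(p / 2)); linarith
      _ = Real.exp ((m : ℝ) * (-(p / 2))) := by rw [Real.exp_nat_mul]
      _ = Real.exp (-((m : ℝ) * p / 2)) := by ring_nf
  calc (2 : ℝ) ^ b * (1 - p / 2) ^ m
      ≤ Real.exp ((b : ℝ) * Real.log 2) * Real.exp (-((m : ℝ) * p / 2)) := by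
        rw [e1]; exact mul_le_mul_of_nonneg_left e2 (Real.exp_nonneg _)
    _ = Real.exp ((b : ℝ) * Real.log 2 - (m : ℝ) * p / 2) := by
        rw [← Real.exp_add]; ring_nf
    _ ≤ Real.exp (-((m : ℝ) * p / 8)) := by
        apply Real.exp_le_exp.2
        nlinarith [Nat.cast_nonneg (α := ℝ) b]
    _ ≤ Real.exp (Real.log (δ / N)) := by
        apply Real.exp_le_exp.2
        have : Real.log (δ / N) = -Real.log (N / δ) := by
          rw [← Real.log_inv]; congr 1; field_simp
        rw [this]; linarith
    _ = δ / N := Real.exp_log (by positivity)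

open scoped Classical in
theorem stmt7 {α : Type*} [MeasurableSpace α] (D : Measure α) [IsProbabilityMeasure D]
    (N : ℕ) (A : Fin N → Set α) (hmeas : ∀ j, MeasurableSet (A j))
    (hdisj : Pairwise (Function.onFun Disjoint A))
    (p : ℝ) (hp : 0 < p) (hA : ∀ j, ENNReal.ofReal p ≤ D (A j))
    (b m : ℕ) (δ : ℝ) (hδ : δ ∈ Set.Ioo (0 : ℝ) 1)
    (h1 : 2 * (b + 1) ≤ (m : ℝ) * p)
    (h2 : 8 * Real.log (N / δ) ≤ (m : ℝ) * p) :
    1 - ENNReal.ofReal δ ≤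
      (Measure.pi fun _ : Fin m => D)
        {ω : Fin m → α | ∀ j : Fin N,
          b + 1 ≤ (Finset.univ.filter fun i : Fin m => ω i ∈ A j).card} := by
  obtain ⟨hδ0, hδ1⟩ := hδ
  set μ := Measure.pi fun _ : Fin m => D with hμdef
  set s := {ω : Fin m → α | ∀ j : Fin N,
      b + 1 ≤ (Finset.univ.filter fun i : Fin m => ω i ∈ A j).card} with hsdef
  -- per-index bound
  have key : ∀ j : Fin N,
      μ {ω : Fin m → α | (Finset.univ.filter fun i : Fin m => ω i ∈ A j).card ≤ b}
        ≤ ENNReal.ofReal (δ / N) := by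
    intro j
    have hN1 : 1 ≤ N := j.pos
    have hq1 : D (A j) ≤ 1 := prob_le_one
    have hp1 : p ≤ 1 := by
      have : ENNReal.ofReal p ≤ 1 := (hA j).trans hq1
      exact_mod_cast ENNReal.ofReal_le_one.mp this
    set f : α → ℝ≥0∞ := fun x => if x ∈ A j then 2⁻¹ else 1 with hfdef
    have hfm : Measurable f := Measurable.ite (hmeas j) measurable_const measurable_const
    set g : (Fin m → α) → ℝ≥0∞ := fun ω => ∏ i, f (ω i) with hgdef
    have hgm : Measurable g :=
      Finset.measurable_prod _ fun i _ => hfm.comp (measurable_pi_apply i)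
    -- value of g on the bad event
    have hgval : ∀ ω : Fin m → α,
        g ω = 2⁻¹ ^ (Finset.univ.filter fun i : Fin m => ω i ∈ A j).card := by
      intro ω
      simp only [hgdef, hfdef, Finset.prod_ite, Finset.prod_const, one_pow, mul_one]
    have hsub : {ω : Fin m → α | (Finset.univ.filter fun i : Fin m => ω i ∈ A j).card ≤ b}
        ⊆ {ω : Fin m → α | (2 : ℝ≥0∞)⁻¹ ^ b ≤ g ω} := by
      intro ω hω
      simp only [Set.mem_setOf_eq] at hω ⊢
      rw [hgval ω]
      exact pow_le_pow_of_le_one zero_le (ENNReal.inv_le_one.2 one_le_two) hω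
    have hmarkov := mul_meas_ge_le_lintegral₀ (μ := μ) hgm.aemeasurable ((2 : ℝ≥0∞)⁻¹ ^ b)
    have hcancel : (2 : ℝ≥0∞) ^ b * 2⁻¹ ^ b = 1 := by
      rw [← mul_pow, ENNReal.mul_inv_cancel (by norm_num) (by norm_num), one_pow]
    -- lintegral of f
    have hflint : ∫⁻ x, f x ∂D ≤ ENNReal.ofReal (1 - p / 2) := by
      have hqne : D (A j) ≠ ∞ := measure_ne_top D _
      have hpq : p ≤ (D (A j)).toReal :=
        (ENNReal.ofReal_le_iff_le_toReal hqne).mp (hA j)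
      have hqr1 : (D (A j)).toReal ≤ 1 := by
        simpa using ENNReal.toReal_mono (by norm_num) hq1
      have hsplit : ∫⁻ x, f x ∂D = 2⁻¹ * D (A j) + (1 - D (A j)) := by
        rw [← lintegral_add_compl f (hmeas j)]
        have ha : ∫⁻ x in A j, f x ∂D = 2⁻¹ * D (A j) := by
          rw [setLIntegral_congr_fun (hmeas j) (fun x hx => if_pos hx),
            setLIntegral_const]
        have hb : ∫⁻ x in (A j)ᶜ, f x ∂D = 1 - D (A j) := by
          rw [setLIntegral_congr_fun (hmeas j).compl
            (fun x (hx : x ∈ (A j)ᶜ) => if_neg hx),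
            setLIntegral_const, one_mul, prob_compl_eq_one_sub (hmeas j)]
        rw [ha, hb]
      rw [hsplit]
      have e1 : (2 : ℝ≥0∞)⁻¹ * D (A j) = ENNReal.ofReal ((D (A j)).toReal / 2) := by
        rw [ENNReal.ofReal_div_of_pos (by norm_num), ENNReal.ofReal_toReal hqne,
          ENNReal.ofReal_ofNat, div_eq_mul_inv, mul_comm]
      have e2 : 1 - D (A j) = ENNReal.ofReal (1 - (D (A j)).toReal) := by
        rw [ENNReal.ofReal_sub _ ENNReal.toReal_nonneg, ENNReal.ofReal_toReal hqne,
          ENNReal.ofReal_one]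
      rw [e1, e2, ← ENNReal.ofReal_add (by positivity) (by linarith)]
      exact ENNReal.ofReal_le_ofReal (by linarith)
    -- combine
    calc μ {ω : Fin m → α | (Finset.univ.filter fun i : Fin m => ω i ∈ A j).card ≤ b}
        ≤ μ {ω : Fin m → α | (2 : ℝ≥0∞)⁻¹ ^ b ≤ g ω} := measure_mono hsub
      _ = (2 : ℝ≥0∞) ^ b * ((2 : ℝ≥0∞)⁻¹ ^ b * μ {ω | (2 : ℝ≥0∞)⁻¹ ^ b ≤ g ω}) := by
          rw [← mul_assoc, hcancel, one_mul]
      _ ≤ (2 : ℝ≥0∞) ^ b * ∫⁻ ω, g ω ∂μ :=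
          mul_le_mul_right hmarkov _
      _ = (2 : ℝ≥0∞) ^ b * (∫⁻ x, f x ∂D) ^ m := by
          rw [hgdef, lintegral_pi_pow D f hfm m]
      _ ≤ (2 : ℝ≥0∞) ^ b * (ENNReal.ofReal (1 - p / 2)) ^ m :=
          mul_le_mul_right (pow_le_pow_left' hflint m) _
      _ = ENNReal.ofReal ((2 : ℝ) ^ b * (1 - p / 2) ^ m) := by
          rw [ENNReal.ofReal_mul (by positivity), ENNReal.ofReal_pow (by linarith),
            ENNReal.ofReal_pow (by linarith), ENNReal.ofReal_ofNat]
      _ ≤ ENNReal.ofReal (δ / N) :=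
          ENNReal.ofReal_le_ofReal
            (real_chernoff_ineq p δ N b m hp hp1 hδ0 hN1 (by push_cast; linarith) h2)
  -- union bound
  have hsub : sᶜ ⊆ ⋃ j : Fin N,
      {ω : Fin m → α | (Finset.univ.filter fun i : Fin m => ω i ∈ A j).card ≤ b} := by
    intro ω hω
    simp only [hsdef, Set.mem_compl_iff, Set.mem_setOf_eq, not_forall, not_le] at hω
    obtain ⟨j, hj⟩ := hω
    exact Set.mem_iUnion.2 ⟨j, Nat.lt_succ_iff.mp hj⟩
  have hcompl : μ sᶜ ≤ ENNReal.ofReal δ := by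
    calc μ sᶜ ≤ ∑ j : Fin N,
          μ {ω : Fin m → α | (Finset.univ.filter fun i : Fin m => ω i ∈ A j).card ≤ b} :=
        (measure_mono hsub).trans (measure_iUnion_fintype_le _ _)
      _ ≤ ∑ _j : Fin N, ENNReal.ofReal (δ / N) := Finset.sum_le_sum fun j _ => key j
      _ ≤ ENNReal.ofReal δ := by
          rcases Nat.eq_zero_or_pos N with hN | hN
          · subst hN; simp
          · rw [Finset.sum_const, Finset.card_univ, Fintype.card_fin, nsmul_eq_mul,
              ← ENNReal.ofReal_natCast, ← ENNReal.ofReal_mul (by positivity)]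
            apply ENNReal.ofReal_le_ofReal
            have hN' : (N : ℝ) ≠ 0 := by positivity
            rw [mul_div_cancel₀ _ hN']
  have hge : (1 : ℝ≥0∞) ≤ μ s + μ sᶜ := by
    calc (1 : ℝ≥0∞) = μ Set.univ := measure_univ.symm
      _ ≤ μ s + μ sᶜ := by
          rw [← Set.union_compl_self s]; exact measure_union_le _ _
  calc 1 - ENNReal.ofReal δ ≤ 1 - μ sᶜ := tsub_le_tsub_left hcompl 1
    _ ≤ μ s := tsub_le_iff_right.2 hge
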